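/- arXiv:2006.13169 — 3 statements merged into one kernel-verified Lean document; each statement's English description precedes it below -/
import Mathlib

section
/- Let S, A be finite, and let d be a probability distribution on S × A that is stationary for (P, π), i.e. d(s',a') = Σ_{s,a} d(s,a) P(s'|s,a) π(a'|s'). Then the Bellman operator B^π is a γ-contraction in the norm ‖Q‖_d := (E_{(s,a)∼d}[Q(s,a)²])^{1/2}: for all Q, Q' : S × A → ℝ, ‖B^π Q − B^π Q'‖_d ≤ γ ‖Q − Q'‖_d. -/
lemma jensen_sq_aux {ι : Type*} [Fintype ι] (w h : ι → ℝ)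
    (hw : ∀ i, 0 ≤ w i) (hw1 : ∑ i, w i = 1) :
    (∑ i, w i * h i) ^ 2 ≤ ∑ i, w i * h i ^ 2 := by
  have key := Finset.sum_mul_sq_le_sq_mul_sq Finset.univ
      (fun i => Real.sqrt (w i)) (fun i => Real.sqrt (w i) * h i)
  have h1 : ∀ i, Real.sqrt (w i) * (Real.sqrt (w i) * h i) = w i * h i := by
    intro i; rw [← mul_assoc, Real.mul_self_sqrt (hw i)]
  have h2 : ∀ i, Real.sqrt (w i) ^ 2 = w i := fun i => Real.sq_sqrt (hw i)
  have h3 : ∀ i, (Real.sqrt (w i) * h i) ^ 2 = w i * h i ^ 2 := by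
    intro i; rw [mul_pow, h2]
  simp only [h1, h2, h3, hw1, one_mul] at key
  exact key

/-- If d is stationary for (P, π), the Bellman evaluation operator B^π is a γ-contraction
with respect to the d-weighted ℓ₂ norm. -/
theorem bellman_contraction_stationary
    {S A : Type*} [Fintype S] [Fintype A]
    (P : S → A → S → ℝ) (π : S → A → ℝ) (r : S → A → ℝ) (γ : ℝ)
    (hγ0 : 0 ≤ γ) (hγ1 : γ < 1)
    (hPnn : ∀ s a s', 0 ≤ P s a s') (hPsum : ∀ s a, ∑ s', P s a s' = 1)
    (hπnn : ∀ s a, 0 ≤ π s a) (hπsum : ∀ s, ∑ a, π s a = 1)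
    (d : S × A → ℝ) (hdnn : ∀ x, 0 ≤ d x) (hdsum : ∑ x, d x = 1)
    (hstat : ∀ y : S × A, d y = ∑ x : S × A, d x * P x.1 x.2 y.1 * π y.1 y.2)
    (Q Q' : S × A → ℝ) :
    Real.sqrt (∑ x : S × A, d x *
        ((r x.1 x.2 + γ * ∑ s', ∑ a', P x.1 x.2 s' * π s' a' * Q (s', a')) -
         (r x.1 x.2 + γ * ∑ s', ∑ a', P x.1 x.2 s' * π s' a' * Q' (s', a'))) ^ 2)
      ≤ γ * Real.sqrt (∑ x : S × A, d x * (Q x - Q' x) ^ 2) := by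
  set f : S × A → ℝ := fun y => Q y - Q' y with hf
  set w : S × A → S × A → ℝ := fun x y => P x.1 x.2 y.1 * π y.1 y.2 with hw
  have hwnn : ∀ x y, 0 ≤ w x y := fun x y => mul_nonneg (hPnn _ _ _) (hπnn _ _)
  have hw1 : ∀ x, ∑ y, w x y = 1 := by
    intro x
    rw [Fintype.sum_prod_type]
    calc ∑ s', ∑ a', P x.1 x.2 s' * π s' a'
        = ∑ s', P x.1 x.2 s' * ∑ a', π s' a' := by simp [Finset.mul_sum]
      _ = ∑ s', P x.1 x.2 s' := by simp [hπsum]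
      _ = 1 := hPsum _ _
  set E : S × A → ℝ := fun x => ∑ y, w x y * f y with hE
  have hdiff : ∀ x : S × A,
      (r x.1 x.2 + γ * ∑ s', ∑ a', P x.1 x.2 s' * π s' a' * Q (s', a')) -
      (r x.1 x.2 + γ * ∑ s', ∑ a', P x.1 x.2 s' * π s' a' * Q' (s', a')) = γ * E x := by
    intro x
    have h1 : (∑ s', ∑ a', P x.1 x.2 s' * π s' a' * Q (s', a')) -
        (∑ s', ∑ a', P x.1 x.2 s' * π s' a' * Q' (s', a')) = E x := by
      rw [hE]
      simp only [hw, hf]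
      rw [Fintype.sum_prod_type, ← Finset.sum_sub_distrib]
      refine Finset.sum_congr rfl fun s' _ => ?_
      rw [← Finset.sum_sub_distrib]
      exact Finset.sum_congr rfl fun a' _ => by ring
    rw [← h1]; ring
  have hLHS : (∑ x : S × A, d x *
      ((r x.1 x.2 + γ * ∑ s', ∑ a', P x.1 x.2 s' * π s' a' * Q (s', a')) -
       (r x.1 x.2 + γ * ∑ s', ∑ a', P x.1 x.2 s' * π s' a' * Q' (s', a'))) ^ 2)
      = γ ^ 2 * ∑ x : S × A, d x * E x ^ 2 := by
    rw [Finset.mul_sum]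
    refine Finset.sum_congr rfl fun x _ => ?_
    rw [hdiff x]; ring
  rw [hLHS, Real.sqrt_mul (sq_nonneg γ), Real.sqrt_sq hγ0]
  refine mul_le_mul_of_nonneg_left ?_ hγ0
  refine Real.sqrt_le_sqrt ?_
  calc ∑ x : S × A, d x * E x ^ 2
      ≤ ∑ x : S × A, d x * ∑ y, w x y * f y ^ 2 := by
        refine Finset.sum_le_sum fun x _ => ?_
        exact mul_le_mul_of_nonneg_left (jensen_sq_aux _ _ (hwnn x) (hw1 x)) (hdnn x)
    _ = ∑ y : S × A, d y * f y ^ 2 := by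
        simp_rw [Finset.mul_sum]
        rw [Finset.sum_comm]
        refine Finset.sum_congr rfl fun y _ => ?_
        have : ∑ x : S × A, d x * (w x y * f y ^ 2)
            = (∑ x : S × A, d x * P x.1 x.2 y.1 * π y.1 y.2) * f y ^ 2 := by
          rw [Finset.sum_mul]
          exact Finset.sum_congr rfl fun x _ => by simp only [hw]; ring
        rw [this, ← hstat y]
end

section
/- Let S, A be finite and γ ∈ (0,1). Suppose d is a probability distribution on S × A with full support whose one-step pushforward d' under (P, π) differs from d (i.e. d' ≠ d). Then B^π is NOT a γ-contraction with respect to ‖·‖_d: there exist Q, Q' : S × A → ℝ with ‖B^π Q − B^π Q'‖_d > γ ‖Q − Q'‖_d. -/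
/-- If a full-support distribution d is not stationary for (P, π), then the Bellman operator
B^π is not a γ-contraction with respect to the d-weighted ℓ₂ norm. -/
theorem bellman_no_contraction_nonstationary
    {S A : Type*} [Fintype S] [Fintype A]
    (P : S → A → S → ℝ) (π : S → A → ℝ) (r : S → A → ℝ) (γ : ℝ)
    (hγ0 : 0 < γ) (hγ1 : γ < 1)
    (hPnn : ∀ s a s', 0 ≤ P s a s') (hPsum : ∀ s a, ∑ s', P s a s' = 1)
    (hπnn : ∀ s a, 0 ≤ π s a) (hπsum : ∀ s, ∑ a, π s a = 1)
    (d : S × A → ℝ) (hdpos : ∀ x, 0 < d x) (hdsum : ∑ x, d x = 1)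
    (hnonstat : (fun y : S × A => ∑ x : S × A, d x * P x.1 x.2 y.1 * π y.1 y.2) ≠ d) :
    ∃ Q Q' : S × A → ℝ,
      Real.sqrt (∑ x : S × A, d x *
          ((r x.1 x.2 + γ * ∑ s', ∑ a', P x.1 x.2 s' * π s' a' * Q (s', a')) -
           (r x.1 x.2 + γ * ∑ s', ∑ a', P x.1 x.2 s' * π s' a' * Q' (s', a'))) ^ 2)
        > γ * Real.sqrt (∑ x : S × A, d x * (Q x - Q' x) ^ 2) := by
  classical
  set f : S × A → ℝ := fun y : S × A => ∑ x : S × A, d x * P x.1 x.2 y.1 * π y.1 y.2 with hf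
  have hfsum : ∑ y : S × A, f y = 1 := by
    rw [hf]
    rw [Finset.sum_comm]
    have h1 : ∀ x : S × A, ∑ y : S × A, d x * P x.1 x.2 y.1 * π y.1 y.2 = d x := by
      intro x
      rw [Fintype.sum_prod_type]
      have h2 : ∀ s' : S, ∑ a', d x * P x.1 x.2 s' * π s' a' = d x * P x.1 x.2 s' := by
        intro s'
        rw [← Finset.mul_sum, hπsum, mul_one]
      simp_rw [h2, ← Finset.mul_sum, hPsum, mul_one]
    simp_rw [h1]
    exact hdsum
  obtain ⟨y, hy⟩ : ∃ y, d y < f y := by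
    by_contra h
    push_neg at h
    apply hnonstat
    funext z
    have h0 : ∑ x : S × A, (d x - f x) = 0 := by
      rw [Finset.sum_sub_distrib, hdsum, hfsum]; ring
    have h1 := (Finset.sum_eq_zero_iff_of_nonneg
      (fun x _ => sub_nonneg.2 (h x))).1 h0 z (Finset.mem_univ z)
    have : f z = d z := by linarith [sub_eq_zero.1 h1]
    simpa [hf] using this
  have hdy := hdpos y
  set ε : ℝ := (f y - d y) / d y with hε
  have hεpos : 0 < ε := div_pos (sub_pos.2 hy) hdy
  have hεdy : ε * d y = f y - d y := by
    rw [hε]; field_simp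
  set p : S × A → ℝ := fun x => P x.1 x.2 y.1 * π y.1 y.2 with hp
  set C : ℝ := ∑ x : S × A, d x * (p x) ^ 2 with hC
  have hC0 : 0 ≤ C := by
    apply Finset.sum_nonneg
    intro x _
    exact mul_nonneg (hdpos x).le (sq_nonneg _)
  have hfyp : ∑ x : S × A, d x * p x = f y := by
    rw [hf, hp]
    exact Finset.sum_congr rfl fun x _ => (mul_assoc _ _ _).symm
  refine ⟨fun z => 1 + ε * (if z = y then 1 else 0), fun _ => 0, ?_⟩
  have hQin : ∀ x : S × A,
      ∑ s', ∑ a', P x.1 x.2 s' * π s' a' * (1 + ε * (if (s', a') = y then 1 else 0))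
        = 1 + ε * p x := by
    intro x
    rw [hp]
    obtain ⟨y1, y2⟩ := y
    have h1 : ∀ s' a', P x.1 x.2 s' * π s' a' * (1 + ε * (if (s',a') = (y1,y2) then 1 else 0))
        = P x.1 x.2 s' * π s' a'
          + ε * (if s' = y1 then (if a' = y2 then P x.1 x.2 s' * π s' a' else 0) else 0) := by
      intro s' a'
      by_cases h : s' = y1 <;> by_cases h' : a' = y2 <;> simp [h, h', Prod.ext_iff] <;> ring
    simp_rw [h1, Finset.sum_add_distrib, ← Finset.mul_sum]
    simp_rw [hπsum, mul_one, hPsum]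
    congr 1
    congr 1
    simp [Finset.sum_ite_eq']
  have hLHS : ∑ x : S × A, d x *
      ((r x.1 x.2 + γ * ∑ s', ∑ a', P x.1 x.2 s' * π s' a' *
          (1 + ε * (if (s', a') = y then 1 else 0))) -
       (r x.1 x.2 + γ * ∑ s', ∑ a', P x.1 x.2 s' * π s' a' * (0:ℝ))) ^ 2
      = γ ^ 2 * (1 + 2 * ε * f y + ε ^ 2 * C) := by
    have e1 : ∀ x : S × A, d x *
        ((r x.1 x.2 + γ * ∑ s', ∑ a', P x.1 x.2 s' * π s' a' *
            (1 + ε * (if (s', a') = y then 1 else 0))) -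
         (r x.1 x.2 + γ * ∑ s', ∑ a', P x.1 x.2 s' * π s' a' * (0:ℝ))) ^ 2
        = γ ^ 2 * d x + γ ^ 2 * (2 * ε) * (d x * p x) + γ ^ 2 * ε ^ 2 * (d x * (p x) ^ 2) := by
      intro x
      rw [hQin x]
      simp only [mul_zero, Finset.sum_const_zero]
      ring
    rw [Finset.sum_congr rfl fun x _ => e1 x]
    rw [Finset.sum_add_distrib, Finset.sum_add_distrib,
      ← Finset.mul_sum, ← Finset.mul_sum, ← Finset.mul_sum, hdsum, hfyp, ← hC]
    ring
  have hRHS : ∑ x : S × A, d x *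
      ((1 + ε * (if x = y then 1 else 0)) - (0:ℝ)) ^ 2
      = 1 + (2 * ε + ε ^ 2) * d y := by
    have e2 : ∀ x : S × A, d x * ((1 + ε * (if x = y then 1 else 0)) - (0:ℝ)) ^ 2
        = d x + (2 * ε + ε ^ 2) * (if x = y then d x else 0) := by
      intro x
      by_cases h : x = y <;> simp [h] <;> ring
    rw [Finset.sum_congr rfl fun x _ => e2 x]
    rw [Finset.sum_add_distrib, ← Finset.mul_sum, hdsum, Finset.sum_ite_eq' Finset.univ y d]
    simp
  have hconv : (∑ x : S × A, d x *
      ((r x.1 x.2 + γ * ∑ s', ∑ a', P x.1 x.2 s' * π s' a' *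
          ((fun z : S × A => 1 + ε * (if z = y then 1 else 0)) (s', a'))) -
       (r x.1 x.2 + γ * ∑ s', ∑ a', P x.1 x.2 s' * π s' a' *
          ((fun _ : S × A => (0:ℝ)) (s', a')))) ^ 2)
      = γ ^ 2 * (1 + 2 * ε * f y + ε ^ 2 * C) := by
    simpa using hLHS
  have hconv2 : (∑ x : S × A, d x *
      ((fun z : S × A => 1 + ε * (if z = y then 1 else 0)) x -
        (fun _ : S × A => (0:ℝ)) x) ^ 2)
      = 1 + (2 * ε + ε ^ 2) * d y := by
    simpa using hRHS
  rw [hconv, hconv2]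
  -- final inequality
  have hB0 : (0:ℝ) ≤ 1 + (2 * ε + ε ^ 2) * d y := by positivity
  have hkey : γ ^ 2 * (1 + (2 * ε + ε ^ 2) * d y) < γ ^ 2 * (1 + 2 * ε * f y + ε ^ 2 * C) := by
    have hγ2 : 0 < γ ^ 2 := by positivity
    apply mul_lt_mul_of_pos_left _ hγ2
    nlinarith [mul_pos hεpos (sub_pos.2 hy), mul_nonneg (sq_nonneg ε) hC0]
  calc γ * Real.sqrt (1 + (2 * ε + ε ^ 2) * d y)
      = Real.sqrt (γ ^ 2 * (1 + (2 * ε + ε ^ 2) * d y)) := by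
        rw [Real.sqrt_mul (sq_nonneg γ), Real.sqrt_sq hγ0.le]
    _ < Real.sqrt (γ ^ 2 * (1 + 2 * ε * f y + ε ^ 2 * C)) := by
        apply Real.sqrt_lt_sqrt (by positivity) hkey
end

section
/- Let f : (0,∞) → ℝ be convex and differentiable, and let P, Q be probability measures on a finite set X with Q(x) > 0 for all x. Then for any function w : X → (0,∞), Σ_x Q(x) f(P(x)/Q(x)) ≥ Σ_x P(x) f'(w(x)) − Σ_x Q(x) f*(f'(w(x))), where f* is the convex conjugate of f, and equality holds when w(x) = P(x)/Q(x) for all x. -/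
lemma grad_ineq {f : ℝ → ℝ} (hconv : ConvexOn ℝ (Set.Ici 0) f)
    {w t fw' : ℝ} (hw : 0 < w) (ht : 0 ≤ t) (hd : HasDerivAt f fw' w) :
    f w + fw' * (t - w) ≤ f t := by
  rcases lt_trichotomy t w with h | h | h
  · have := hconv.slope_le_of_hasDerivAt (Set.mem_Ici.2 ht) (Set.mem_Ici.2 hw.le) h hd
    rw [slope_def_field, div_le_iff₀ (by linarith : (0:ℝ) < w - t)] at this
    nlinarith
  · subst h; simp
  · have := hconv.le_slope_of_hasDerivAt (Set.mem_Ici.2 hw.le) (Set.mem_Ici.2 ht) h hd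
    rw [slope_def_field, le_div_iff₀ (by linarith : (0:ℝ) < t - w)] at this
    nlinarith

/-- Variational (Nguyen–Wainwright–Jordan) lower bound on f-divergences over a finite set,
with equality at the density ratio w = P/Q. -/
theorem f_divergence_variational_bound
    {X : Type*} [Fintype X]
    (f f' fstar : ℝ → ℝ)
    (hconv : ConvexOn ℝ (Set.Ici 0) f)
    (hderiv : ∀ u : ℝ, 0 < u → HasDerivAt f (f' u) u)
    (hfstar : ∀ u : ℝ, 0 < u → fstar (f' u) = u * f' u - f u)
    (P Q : X → ℝ)
    (hPnn : ∀ x, 0 ≤ P x) (hPsum : ∑ x, P x = 1)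
    (hQpos : ∀ x, 0 < Q x) (hQsum : ∑ x, Q x = 1)
    (w : X → ℝ) (hw : ∀ x, 0 < w x) :
    (∑ x, Q x * f (P x / Q x)
        ≥ ∑ x, P x * f' (w x) - ∑ x, Q x * fstar (f' (w x))) ∧
      ((∀ x, w x = P x / Q x) →
        ∑ x, Q x * f (P x / Q x)
          = ∑ x, P x * f' (w x) - ∑ x, Q x * fstar (f' (w x))) := by
  constructor
  · rw [ge_iff_le, sub_le_iff_le_add, ← Finset.sum_add_distrib]
    apply Finset.sum_le_sum
    intro x _
    have hq := hQpos x
    have ht : 0 ≤ P x / Q x := div_nonneg (hPnn x) hq.le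
    have key := grad_ineq hconv (hw x) ht (hderiv (w x) (hw x))
    rw [hfstar (w x) (hw x)]
    have h2 : P x * f' (w x) = Q x * ((P x / Q x) * f' (w x)) := by
      field_simp
    rw [h2, ← mul_add, mul_le_mul_iff_right₀ hq]
    nlinarith [key]
  · intro heq
    rw [← Finset.sum_sub_distrib]
    apply Finset.sum_congr rfl
    intro x _
    have hq := hQpos x
    rw [heq x, hfstar _ (by rw [← heq x]; exact hw x)]
    field_simp
    ring
end
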